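/- Right translation is multiplicative with respect to the left-covariant tensor product: for every h ∈ S and all component functions T₁ (rank r) and T₂ (rank s) as below, R*_h (T₁ ⊗_L T₂) = (R*_h T₁) ⊗_L (R*_h T₂). -/

import Mathlib

/-- Bicovariance: `S` is closed under conjugation by its elements and their inverses. -/
def Bicovariant {G : Type*} [Group G] (S : Set G) : Prop :=
  ∀ h ∈ S, ∀ k ∈ S, h * k * h⁻¹ ∈ S ∧ h⁻¹ * k * h ∈ S

/-- The (ordered) product `h₁ h₂ ⋯ h_r` of the entries of a tuple of elements of `S`. -/
def tupleProd {G : Type*} [Group G] {S : Set G} {r : ℕ} (h : Fin r → S) : G :=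
  (List.ofFn fun i => ((h i : G))).prod

lemma conj_listProd_mem {G : Type*} [Group G] {S : Set G} (hS : Bicovariant S)
    (L : List G) (hL : ∀ x ∈ L, x ∈ S) {k : G} (hk : k ∈ S) :
    L.prod * k * L.prod⁻¹ ∈ S := by
  induction L with
  | nil => simpa using hk
  | cons a t ih =>
      have ha : a ∈ S := hL a (by simp)
      have ht : ∀ x ∈ t, x ∈ S := fun x hx => hL x (by simp [hx])
      have h1 : t.prod * k * t.prod⁻¹ ∈ S := ih ht
      have h2 := (hS a ha _ h1).1
      simpa [List.prod_cons, mul_assoc] using h2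

lemma conj_tupleProd_mem {G : Type*} [Group G] {S : Set G} (hS : Bicovariant S)
    {r : ℕ} (h : Fin r → S) {k : G} (hk : k ∈ S) :
    tupleProd h * k * (tupleProd h)⁻¹ ∈ S := by
  refine conj_listProd_mem hS _ ?_ hk
  intro x hx
  obtain ⟨i, rfl⟩ := List.mem_ofFn.mp hx
  exact (h i).2

/-- Conjugation of `k ∈ S` by the product of a tuple of elements of `S`. -/
def conjByProd {G : Type*} [Group G] {S : Set G} (hS : Bicovariant S)
    {r : ℕ} (h : Fin r → S) (k : S) : S :=
  ⟨tupleProd h * (k : G) * (tupleProd h)⁻¹, conj_tupleProd_mem hS h k.2⟩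

/-- Left-covariant tensor product of component functions of tensors on the
group lattice `(G,S)`:
`(T₁ ⊗_L T₂)(g)(h₁,…,h_r,k₁,…,k_s) = T₁(g)(h₁,…,h_r) · T₂(g)(p k₁ p⁻¹,…,p k_s p⁻¹)`
with `p = h₁ ⋯ h_r`. -/
def oL {G : Type*} [Group G] {S : Set G} (hS : Bicovariant S) {r s : ℕ}
    (T₁ : G → (Fin r → S) → ℝ) (T₂ : G → (Fin s → S) → ℝ) :
    G → (Fin (r + s) → S) → ℝ :=
  fun g H =>
    T₁ g (fun i => H (Fin.castAdd s i)) *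
      T₂ g (fun j => conjByProd hS (fun i => H (Fin.castAdd s i)) (H (Fin.natAdd r j)))

/-- Right translation of a rank-`r` tensor component function by `h ∈ S`:
`(R*_h T)(g)(k₁,…,k_r) = T(g·h)(h⁻¹k₁h,…,h⁻¹k_rh)`. -/
def Rstar {G : Type*} [Group G] {S : Set G} (hS : Bicovariant S) (h : S) {r : ℕ}
    (T : G → (Fin r → S) → ℝ) : G → (Fin r → S) → ℝ :=
  fun g k => T (g * h) (fun i => ⟨(h : G)⁻¹ * (k i : G) * h, (hS h h.2 _ (k i).2).2⟩)

/-- Right translation is multiplicative with respect to the left-covariant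
tensor product: `R*_h (T₁ ⊗_L T₂) = (R*_h T₁) ⊗_L (R*_h T₂)`. -/

lemma tupleProd_conj {G : Type*} [Group G] {r : ℕ} (h : G) (k : Fin r → G) :
    (List.ofFn fun i => h⁻¹ * k i * h).prod = h⁻¹ * (List.ofFn k).prod * h := by
  induction r with
  | zero => simp
  | succ n ih =>
      rw [List.ofFn_succ, List.ofFn_succ, List.prod_cons, List.prod_cons, ih fun i => k i.succ]
      simp [mul_assoc]

theorem Rstar_oL {G : Type*} [Group G] {S : Set G} (hS : Bicovariant S) (h : S)
    {r s : ℕ} (T₁ : G → (Fin r → S) → ℝ) (T₂ : G → (Fin s → S) → ℝ) :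
    Rstar hS h (oL hS T₁ T₂) = oL hS (Rstar hS h T₁) (Rstar hS h T₂) := by
  funext g H
  simp only [Rstar, oL, conjByProd, tupleProd]
  congr 1
  refine congrArg _ (funext fun j => Subtype.ext ?_)
  simp only
  rw [tupleProd_conj]
  group
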